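/- Let Y be a real-valued random variable on a probability space, let F(t) = P(Y ≤ t) be its cumulative distribution function, let τ ∈ (0,1), and let a ∈ ℝ satisfy F(a) = τ. Then for every δ ∈ ℝ, the random variable ρ_τ(Y − a − δ) − ρ_τ(Y − a) is bounded in absolute value by |δ| (hence integrable), and E[ρ_τ(Y − a − δ) − ρ_τ(Y − a)] = ∫_0^δ (F(a + z) − F(a)) dz, where ∫_0^δ denotes the signed integral. -/

import Mathlib

open MeasureTheory intervalIntegral

/-- The check (quantile) loss `ρ_τ(u) = max {τ·u, (τ−1)·u}`. -/

noncomputable def checkLoss (τ u : ℝ) : ℝ := max (τ * u) ((τ - 1) * u)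

lemma checkLoss_eq (τ u : ℝ) : checkLoss τ u = τ * u + max 0 (-u) := by
  unfold checkLoss
  rcases le_total 0 u with h | h
  · rw [max_eq_left (by nlinarith), max_eq_left (by linarith)]; ring
  · rw [max_eq_right (by nlinarith), max_eq_right (by linarith)]; ring

lemma checkLoss_diff (τ u δ : ℝ) :
    checkLoss τ (u - δ) - checkLoss τ u = -(τ * δ) + (max δ u - max 0 u) := by
  rw [checkLoss_eq, checkLoss_eq]
  have h1 : max 0 (-(u - δ)) = max 0 (u - δ) - (u - δ) := by
    rcases le_total 0 (u - δ) with h | h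
    · rw [max_eq_left (show -(u - δ) ≤ 0 by linarith), max_eq_right h]; ring
    · rw [max_eq_right (show (0:ℝ) ≤ -(u - δ) by linarith), max_eq_left h]; ring
  have h2 : max 0 (-u) = max 0 u - u := by
    rcases le_total 0 u with h | h
    · rw [max_eq_left (show -u ≤ 0 by linarith), max_eq_right h]; ring
    · rw [max_eq_right (show (0:ℝ) ≤ -u by linarith), max_eq_left h]; ring
  have h3 : max δ u = δ + max 0 (u - δ) := by
    rcases le_total δ u with h | h
    · rw [max_eq_right h, max_eq_right (show (0:ℝ) ≤ u - δ by linarith)]; ring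
    · rw [max_eq_left h, max_eq_left (show u - δ ≤ 0 by linarith)]; ring
  rw [h1, h2, h3]; ring

lemma vol_step (c l u : ℝ) (hlu : l ≤ u) :
    (volume (Set.Ici c ∩ Set.Ioc l u)).toReal = max u c - max l c := by
  have hsub1 : Set.Ioc (max l c) u ⊆ Set.Ici c ∩ Set.Ioc l u := by
    intro z hz
    exact ⟨le_of_lt (lt_of_le_of_lt (le_max_right l c) hz.1),
      lt_of_le_of_lt (le_max_left l c) hz.1, hz.2⟩
  have hsub2 : Set.Ici c ∩ Set.Ioc l u ⊆ Set.Icc (max l c) u := by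
    intro z hz
    exact ⟨max_le (le_of_lt hz.2.1) hz.1, hz.2.2⟩
  have hvol : volume (Set.Ici c ∩ Set.Ioc l u) = ENNReal.ofReal (u - max l c) := by
    apply le_antisymm
    · calc volume (Set.Ici c ∩ Set.Ioc l u) ≤ volume (Set.Icc (max l c) u) := measure_mono hsub2
        _ = ENNReal.ofReal (u - max l c) := Real.volume_Icc
    · calc ENNReal.ofReal (u - max l c) = volume (Set.Ioc (max l c) u) := Real.volume_Ioc.symm
        _ ≤ volume (Set.Ici c ∩ Set.Ioc l u) := measure_mono hsub1
  rw [hvol]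
  rcases le_total c u with h | h
  · rw [ENNReal.toReal_ofReal (by rcases le_total l c with h' | h' <;>
      simp [max_eq_left, max_eq_right, *])]
    rw [max_eq_left h]
  · have : max l c = c := max_eq_right (le_trans hlu h)
    rw [this, max_eq_right h, ENNReal.ofReal_eq_zero.mpr (by linarith)]
    simp

lemma setInt_step (c l u : ℝ) (hlu : l ≤ u) :
    ∫ z in Set.Ioc l u, (if c ≤ z then (1:ℝ) else 0) = max u c - max l c := by
  have heq : (fun z : ℝ => if c ≤ z then (1:ℝ) else 0) =
      (Set.Ici c).indicator (fun _ => (1:ℝ)) := by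
    funext z; simp [Set.indicator_apply, Set.mem_Ici]
  rw [heq, MeasureTheory.integral_indicator measurableSet_Ici, Measure.restrict_restrict measurableSet_Ici,
    setIntegral_const, smul_eq_mul, mul_one, measureReal_def, vol_step c l u hlu]

lemma integral_step (c δ : ℝ) :
    ∫ z in (0:ℝ)..δ, (if c ≤ z then (1:ℝ) else 0) = max δ c - max 0 c := by
  rcases le_total 0 δ with h | h
  · rw [intervalIntegral.integral_of_le h, setInt_step c 0 δ h]
  · rw [intervalIntegral.integral_symm, intervalIntegral.integral_of_le h,
      setInt_step c δ 0 h]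
    ring

lemma swap_step {Ω : Type*} [MeasurableSpace Ω] (μ : Measure Ω) [IsProbabilityMeasure μ]
    (Y : Ω → ℝ) (hY : Measurable Y) (a l u : ℝ) :
    ∫ ω, (∫ z in Set.Ioc l u, (if Y ω ≤ a + z then (1:ℝ) else 0)) ∂μ
      = ∫ z in Set.Ioc l u, (μ {ω | Y ω ≤ a + z}).toReal := by
  haveI : IsFiniteMeasure (volume.restrict (Set.Ioc l u)) :=
    ⟨by rw [Measure.restrict_apply_univ]; exact measure_Ioc_lt_top⟩
  have hmes : Measurable (Function.uncurry fun (ω : Ω) (z : ℝ) =>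
      if Y ω ≤ a + z then (1:ℝ) else 0) := by
    have hs : MeasurableSet {p : Ω × ℝ | Y p.1 ≤ a + p.2} := by
      have : {p : Ω × ℝ | Y p.1 ≤ a + p.2} = {p : Ω × ℝ | Y p.1 - p.2 ≤ a} := by
        ext p; simp only [Set.mem_setOf_eq]; constructor <;> intro h <;> linarith
      rw [this]
      exact ((hY.comp measurable_fst).sub measurable_snd) measurableSet_Iic
    exact Measurable.ite hs measurable_const measurable_const
  have hint : Integrable (Function.uncurry fun (ω : Ω) (z : ℝ) =>
      if Y ω ≤ a + z then (1:ℝ) else 0) (μ.prod (volume.restrict (Set.Ioc l u))) := by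
    refine (integrable_const (1:ℝ)).mono' hmes.aestronglyMeasurable (ae_of_all _ fun p => ?_)
    simp only [Function.uncurry]
    split_ifs <;> simp
  rw [integral_integral_swap hint]
  refine setIntegral_congr_fun measurableSet_Ioc fun z _ => ?_
  have heq : (fun ω => if Y ω ≤ a + z then (1:ℝ) else 0) =
      Set.indicator {ω | Y ω ≤ a + z} (fun _ => (1:ℝ)) := by
    funext ω; simp [Set.indicator_apply]
  rw [heq, MeasureTheory.integral_indicator (show MeasurableSet {ω | Y ω ≤ a + z} from hY measurableSet_Iic), setIntegral_const,
    smul_eq_mul, mul_one, measureReal_def]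

/-- Let `Y` be a real random variable on a probability space with CDF `F`, let `τ ∈ (0,1)`
and let `a` be a `τ`-quantile, i.e. `F a = τ`.  Then for every `δ ∈ ℝ` the random variable
`ρ_τ(Y − a − δ) − ρ_τ(Y − a)` is bounded by `|δ|` (hence integrable), and its expectation
equals the signed integral `∫_0^δ (F(a+z) − F(a)) dz`. -/
theorem expectation_checkLoss_increment
    {Ω : Type*} [MeasurableSpace Ω] (μ : Measure Ω) [IsProbabilityMeasure μ]
    (Y : Ω → ℝ) (hY : Measurable Y)
    (F : ℝ → ℝ) (hF : ∀ t, F t = (μ {ω | Y ω ≤ t}).toReal)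
    (τ : ℝ) (hτ : τ ∈ Set.Ioo (0 : ℝ) 1) (a : ℝ) (ha : F a = τ) (δ : ℝ) :
    (∀ ω, |checkLoss τ (Y ω - a - δ) - checkLoss τ (Y ω - a)| ≤ |δ|) ∧
    Integrable (fun ω => checkLoss τ (Y ω - a - δ) - checkLoss τ (Y ω - a)) μ ∧
    ∫ ω, (checkLoss τ (Y ω - a - δ) - checkLoss τ (Y ω - a)) ∂μ =
      ∫ z in (0 : ℝ)..δ, (F (a + z) - F a) := by
  obtain ⟨hτ0, hτ1⟩ := hτ
  -- the pointwise bound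
  have hbound : ∀ ω, |checkLoss τ (Y ω - a - δ) - checkLoss τ (Y ω - a)| ≤ |δ| := by
    intro ω
    unfold checkLoss
    refine (abs_max_sub_max_le_max _ _ _ _).trans (max_le ?_ ?_)
    · have h1 : τ * (Y ω - a - δ) - τ * (Y ω - a) = τ * (-δ) := by ring
      rw [h1, abs_mul, abs_neg, abs_of_pos hτ0]
      nlinarith [abs_nonneg δ]
    · have h1 : (τ - 1) * (Y ω - a - δ) - (τ - 1) * (Y ω - a) = (τ - 1) * (-δ) := by ring
      rw [h1, abs_mul, abs_neg, abs_of_neg (by linarith : τ - 1 < 0)]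
      nlinarith [abs_nonneg δ]
  -- measurability
  have hm : Measurable (fun ω => checkLoss τ (Y ω - a - δ) - checkLoss τ (Y ω - a)) := by
    unfold checkLoss
    fun_prop
  have hint : Integrable (fun ω => checkLoss τ (Y ω - a - δ) - checkLoss τ (Y ω - a)) μ :=
    (integrable_const |δ|).mono' hm.aestronglyMeasurable
      (ae_of_all _ fun ω => by rw [Real.norm_eq_abs]; exact hbound ω)
  refine ⟨hbound, hint, ?_⟩
  -- the pointwise decomposition
  have hpt : ∀ ω, checkLoss τ (Y ω - a - δ) - checkLoss τ (Y ω - a)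
      = -(τ * δ) + (max δ (Y ω - a) - max 0 (Y ω - a)) := fun ω =>
    checkLoss_diff τ (Y ω - a) δ
  have hgm : Measurable (fun ω => max δ (Y ω - a) - max 0 (Y ω - a)) := by fun_prop
  have hg_int : Integrable (fun ω => max δ (Y ω - a) - max 0 (Y ω - a)) μ := by
    refine (integrable_const |δ|).mono' hgm.aestronglyMeasurable (ae_of_all _ fun ω => ?_)
    rw [Real.norm_eq_abs]
    have := abs_max_sub_max_le_abs δ 0 (Y ω - a)
    rwa [sub_zero] at this
  have hstep : ∀ ω, max δ (Y ω - a) - max 0 (Y ω - a)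
      = ∫ z in (0:ℝ)..δ, (if Y ω ≤ a + z then (1:ℝ) else 0) := by
    intro ω
    rw [← integral_step (Y ω - a) δ]
    refine intervalIntegral.integral_congr fun z _ => ?_
    by_cases h : Y ω - a ≤ z
    · rw [if_pos h, if_pos (by linarith)]
    · rw [if_neg h, if_neg (fun hc => h (by linarith))]
  -- Fubini
  have hswap : ∫ ω, (max δ (Y ω - a) - max 0 (Y ω - a)) ∂μ
      = ∫ z in (0:ℝ)..δ, F (a + z) := by
    simp only [hstep]
    rcases le_total 0 δ with hδ | hδ
    · simp only [intervalIntegral.integral_of_le hδ]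
      rw [swap_step μ Y hY a 0 δ]
      exact setIntegral_congr_fun measurableSet_Ioc fun z _ => (hF (a + z)).symm
    · simp only [intervalIntegral.integral_symm δ 0, intervalIntegral.integral_of_le hδ]
      rw [MeasureTheory.integral_neg, swap_step μ Y hY a δ 0]
      congr 1
      exact setIntegral_congr_fun measurableSet_Ioc fun z _ => (hF (a + z)).symm
  -- interval integrability of F ∘ (a + ·)
  have hmono : Monotone F := fun s t hst => by
    rw [hF, hF]
    exact ENNReal.toReal_mono (measure_ne_top μ _)
      (measure_mono fun ω h => le_trans h hst)
  have hFi : IntervalIntegrable (fun z => F (a + z)) volume 0 δ :=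
    ((hmono.comp (fun x y h => add_le_add (le_refl a) h : Monotone fun z => a + z)).monotoneOn _).intervalIntegrable
  rw [intervalIntegral.integral_sub hFi intervalIntegrable_const,
    intervalIntegral.integral_const, ha]
  simp only [hpt]
  rw [integral_add (integrable_const _) hg_int, MeasureTheory.integral_const, hswap]
  simp only [measureReal_def, measure_univ, ENNReal.toReal_one, one_smul, smul_eq_mul, sub_zero]
  ring
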